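/- Let z_δ = iδ/(2(2 − iδ)) for δ > 0 and 0 < ρ < 1. There exists δ₀ > 0 and constants 0 < c₁ ≤ c₂ such that for all 0 < δ ≤ δ₀ and all integers n ≥ 1, c₁(δ² + ρ^{2n}) ≤ |4z_δ² − ρ^{2n}| ≤ c₂(δ² + ρ^{2n}). -/

import Mathlib

/-- There exist δ₀ > 0 and 0 < c₁ ≤ c₂ with
c₁(δ²+ρ^{2n}) ≤ |4z_δ² − ρ^{2n}| ≤ c₂(δ²+ρ^{2n}) for all 0 < δ ≤ δ₀ and n ≥ 1. -/
theorem stmt10 (ρ : ℝ) (hρ : 0 < ρ) (hρ1 : ρ < 1) (z : ℝ → ℂ)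
    (hz : ∀ δ : ℝ, z δ = Complex.I * δ / (2 * (2 - Complex.I * δ))) :
    ∃ δ₀ : ℝ, 0 < δ₀ ∧ ∃ c₁ c₂ : ℝ, 0 < c₁ ∧ c₁ ≤ c₂ ∧
      ∀ δ : ℝ, 0 < δ → δ ≤ δ₀ → ∀ n : ℕ, 1 ≤ n →
        c₁ * (δ ^ 2 + ρ ^ (2 * n)) ≤ ‖4 * z δ ^ 2 - ((ρ ^ (2 * n) : ℝ) : ℂ)‖ ∧
        ‖4 * z δ ^ 2 - ((ρ ^ (2 * n) : ℝ) : ℂ)‖ ≤ c₂ * (δ ^ 2 + ρ ^ (2 * n)) := by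
  refine ⟨1, one_pos, 1/5, 1, by norm_num, by norm_num, ?_⟩
  intro δ hδ hδ1 n hn
  set r : ℝ := ρ ^ (2 * n) with hr
  have hr0 : 0 < r := pow_pos hρ _
  have hδsq : δ ^ 2 ≤ 1 := by nlinarith
  have hw : (2 - Complex.I * (δ : ℂ)) ≠ 0 := by
    intro h
    have := congrArg Complex.re h
    simp at this
  have hzv : (4 : ℂ) * z δ ^ 2 - (r : ℂ) =
      (-((δ : ℂ) ^ 2) - (r : ℂ) * (2 - Complex.I * δ) ^ 2) / (2 - Complex.I * δ) ^ 2 := by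
    rw [hz]
    field_simp
    ring_nf
    linear_combination (4 * (δ : ℂ) ^ 2) * Complex.I_sq
  have hD : ‖(2 - Complex.I * (δ : ℂ)) ^ 2‖ = 4 + δ ^ 2 := by
    rw [norm_pow, Complex.sq_norm]
    simp [Complex.normSq_apply]
    ring
  set N : ℂ := -((δ : ℂ) ^ 2) - (r : ℂ) * (2 - Complex.I * δ) ^ 2 with hN
  have hre : N.re = -(δ ^ 2) - r * (4 - δ ^ 2) := by
    simp only [hN, Complex.sub_re, Complex.neg_re, Complex.mul_re, Complex.mul_im,
      Complex.sub_im, Complex.neg_im, Complex.ofReal_re, Complex.ofReal_im, Complex.I_re,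
      Complex.I_im, pow_two, Complex.re_ofNat, Complex.im_ofNat]
    ring
  have hlowN : δ ^ 2 + r * (4 - δ ^ 2) ≤ ‖N‖ := by
    have h1 : |N.re| ≤ ‖N‖ := Complex.abs_re_le_norm N
    rw [hre] at h1
    have h2 : -(δ ^ 2) - r * (4 - δ ^ 2) ≤ 0 := by nlinarith
    calc δ ^ 2 + r * (4 - δ ^ 2) = |(-(δ ^ 2) - r * (4 - δ ^ 2))| := by
          rw [abs_of_nonpos h2]; ring
      _ ≤ _ := h1
  have hupN : ‖N‖ ≤ δ ^ 2 + r * (4 + δ ^ 2) := by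
    have h1 := norm_add_le (-((δ : ℂ) ^ 2)) (-((r : ℂ) * (2 - Complex.I * δ) ^ 2))
    rw [show -((δ : ℂ) ^ 2) + -((r : ℂ) * (2 - Complex.I * δ) ^ 2) = N by rw [hN]; ring] at h1
    rw [norm_neg, norm_neg, norm_mul, hD] at h1
    simpa [map_pow, Complex.norm_real, abs_of_pos hδ, abs_of_pos hr0] using h1
  have habs : ‖4 * z δ ^ 2 - ((r : ℝ) : ℂ)‖ = ‖N‖ / (4 + δ ^ 2) := by
    rw [hzv, norm_div, hD, hN]
  rw [habs]
  have hD0 : (0 : ℝ) < 4 + δ ^ 2 := by positivity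
  constructor
  · rw [le_div_iff₀ hD0]
    nlinarith [mul_nonneg hr0.le (sub_nonneg.2 hδsq), mul_nonneg (sq_nonneg δ) (sub_nonneg.2 hδsq)]
  · rw [div_le_iff₀ hD0]
    nlinarith [sq_nonneg δ]
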